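/- The functions t ↦ e^{√(-t)}/sinh(2√(-t)) and t ↦ e^{-√(-t)}/sinh(2√(-t)), defined for t < 0 (with √ the positive square root of -t), are absolutely monotonic on (-∞,0): all their derivatives are nonnegative there. -/

import Mathlib

open Polynomial Filter

/-- Polynomials describing iterated derivatives of `exp (-a * sqrt (-t))`. -/
noncomputable def myP (a : ℝ) : ℕ → Polynomial ℝ
  | 0 => 1
  | (k+1) => Polynomial.C (a/2) * (myP a k * Polynomial.X) +
      Polynomial.C (1/2) * ((myP a k).derivative * Polynomial.X ^ 3)

/-- Candidate for the `k`-th derivative of `exp (-a * sqrt (-t))`. -/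
noncomputable def myG (a : ℝ) (k : ℕ) (s : ℝ) : ℝ :=
  Real.exp (-(a * Real.sqrt (-s))) * (myP a k).eval ((Real.sqrt (-s))⁻¹)

lemma myP_coeff_nonneg {a : ℝ} (ha : 0 ≤ a) (k : ℕ) (i : ℕ) : 0 ≤ (myP a k).coeff i := by
  induction k generalizing i with
  | zero =>
    simp only [myP, Polynomial.coeff_one]
    split <;> norm_num
  | succ k ih =>
    simp only [myP, Polynomial.coeff_add, Polynomial.coeff_C_mul]
    have h1 : 0 ≤ (myP a k * Polynomial.X).coeff i := by
      rw [show (Polynomial.X : Polynomial ℝ) = Polynomial.X ^ 1 by ring,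
        Polynomial.coeff_mul_X_pow']
      split
      · exact ih _
      · exact le_rfl
    have h2 : 0 ≤ ((myP a k).derivative * Polynomial.X ^ 3).coeff i := by
      rw [Polynomial.coeff_mul_X_pow']
      split
      · rw [Polynomial.coeff_derivative]
        exact mul_nonneg (ih _) (by positivity)
      · exact le_rfl
    have e1 : (0:ℝ) ≤ a / 2 * (myP a k * Polynomial.X).coeff i :=
      mul_nonneg (by linarith) h1
    have e2 : (0:ℝ) ≤ 1 / 2 * ((myP a k).derivative * Polynomial.X ^ 3).coeff i :=
      mul_nonneg (by norm_num) h2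
    linarith

lemma myP_coeff_le {a : ℝ} (ha : 0 ≤ a) (k : ℕ) (i : ℕ) :
    (myP a k).coeff i ≤ (a+1)^k * (myP 1 k).coeff i := by
  induction k generalizing i with
  | zero => simp [myP]
  | succ k ih =>
    have hM0 : (0:ℝ) ≤ (a+1)^k := by positivity
    have hM1 : (1:ℝ) ≤ a + 1 := by linarith
    simp only [myP, Polynomial.coeff_add, Polynomial.coeff_C_mul]
    have h1 : (myP a k * Polynomial.X).coeff i ≤ (a+1)^k * (myP 1 k * Polynomial.X).coeff i := by
      rw [show (Polynomial.X : Polynomial ℝ) = Polynomial.X ^ 1 by ring,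
        Polynomial.coeff_mul_X_pow', Polynomial.coeff_mul_X_pow']
      split
      · exact ih _
      · simp
    have h2 : ((myP a k).derivative * Polynomial.X ^ 3).coeff i ≤
        (a+1)^k * ((myP 1 k).derivative * Polynomial.X ^ 3).coeff i := by
      rw [Polynomial.coeff_mul_X_pow', Polynomial.coeff_mul_X_pow']
      split
      · rw [Polynomial.coeff_derivative, Polynomial.coeff_derivative]
        have h := mul_le_mul_of_nonneg_right (ih (i - 3 + 1))
          (show (0:ℝ) ≤ (↑(i - 3) + 1) by positivity)
        nlinarith [h]
      · simp
    have hB1 : 0 ≤ (myP 1 k * Polynomial.X).coeff i := by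
      rw [show (Polynomial.X : Polynomial ℝ) = Polynomial.X ^ 1 by ring,
        Polynomial.coeff_mul_X_pow']
      split
      · exact myP_coeff_nonneg one_pos.le _ _
      · exact le_rfl
    have hB2 : 0 ≤ ((myP 1 k).derivative * Polynomial.X ^ 3).coeff i := by
      rw [Polynomial.coeff_mul_X_pow']
      split
      · rw [Polynomial.coeff_derivative]
        exact mul_nonneg (myP_coeff_nonneg one_pos.le _ _) (by positivity)
      · exact le_rfl
    set B1 := (myP a k * Polynomial.X).coeff i
    set B2 := ((myP a k).derivative * Polynomial.X ^ 3).coeff i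
    set A1 := (myP 1 k * Polynomial.X).coeff i
    set A2 := ((myP 1 k).derivative * Polynomial.X ^ 3).coeff i
    have e1 : a / 2 * B1 ≤ a / 2 * ((a+1)^k * A1) :=
      mul_le_mul_of_nonneg_left h1 (by linarith)
    have e2 : 1 / 2 * B2 ≤ 1 / 2 * ((a+1)^k * A2) :=
      mul_le_mul_of_nonneg_left h2 (by norm_num)
    have e3 : a / 2 * ((a+1)^k * A1) ≤ (a+1) / 2 * ((a+1)^k * A1) := by
      nlinarith [mul_nonneg hM0 hB1]
    have e4 : 1 / 2 * ((a+1)^k * A2) ≤ (a+1) / 2 * ((a+1)^k * A2) := by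
      nlinarith [mul_nonneg hM0 hB2]
    rw [pow_succ]
    nlinarith [e1, e2, e3, e4]

/-- Monotone comparison of evaluations of polynomials with nonneg coefficients. -/
lemma eval_le_eval {p q : Polynomial ℝ} {x y : ℝ} (hx : 0 ≤ x) (hxy : x ≤ y)
    (hp : ∀ i, 0 ≤ p.coeff i) (hpq : ∀ i, p.coeff i ≤ q.coeff i) :
    p.eval x ≤ q.eval y := by
  set N := max p.natDegree q.natDegree + 1 with hN
  have hpN : p.natDegree < N := by omega
  have hqN : q.natDegree < N := by omega
  rw [Polynomial.eval_eq_sum_range' hpN, Polynomial.eval_eq_sum_range' hqN]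
  apply Finset.sum_le_sum
  intro i _
  have h1 : 0 ≤ p.coeff i := hp i
  have h2 : p.coeff i ≤ q.coeff i := hpq i
  have h3 : x ^ i ≤ y ^ i := pow_le_pow_left₀ hx hxy i
  have h4 : (0:ℝ) ≤ x ^ i := pow_nonneg hx i
  nlinarith

lemma eval_nonneg' {p : Polynomial ℝ} {x : ℝ} (hx : 0 ≤ x) (hp : ∀ i, 0 ≤ p.coeff i) :
    0 ≤ p.eval x := by
  have := eval_le_eval (p := 0) (q := p) hx le_rfl (by simp) (by simpa using hp)
  simpa using this

lemma myG_nonneg {a : ℝ} (ha : 0 ≤ a) (k : ℕ) (s : ℝ) : 0 ≤ myG a k s := by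
  apply mul_nonneg (Real.exp_nonneg _)
  exact eval_nonneg' (by positivity) (myP_coeff_nonneg ha k)

lemma myP_eval_succ (a : ℝ) (k : ℕ) (v : ℝ) :
    (myP a (k+1)).eval v = a/2 * v * (myP a k).eval v
      + 1/2 * v^3 * ((myP a k).derivative).eval v := by
  simp only [myP, Polynomial.eval_add, Polynomial.eval_mul, Polynomial.eval_C,
    Polynomial.eval_X, Polynomial.eval_pow]
  ring

lemma hasDerivAt_myG (a : ℝ) (k : ℕ) {t : ℝ} (ht : t < 0) :
    HasDerivAt (myG a k) (myG a (k+1) t) t := by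
  set r := Real.sqrt (-t) with hrdef
  have hr : 0 < r := Real.sqrt_pos.2 (by linarith)
  have hs : HasDerivAt (fun s : ℝ => Real.sqrt (-s)) (1 / (2 * r) * (-1)) t := by
    have h1 : HasDerivAt Real.sqrt (1 / (2 * Real.sqrt (-t))) (-t) :=
      Real.hasDerivAt_sqrt (by linarith)
    have h2 : HasDerivAt (fun s : ℝ => -s) (-1) t := (hasDerivAt_id t).neg
    exact h1.comp t h2
  have hE : HasDerivAt (fun s : ℝ => Real.exp (-(a * Real.sqrt (-s))))
      (Real.exp (-(a * r)) * -(a * (1 / (2 * r) * (-1)))) t :=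
    ((hs.const_mul a).neg).exp
  have hv : HasDerivAt (fun s : ℝ => (Real.sqrt (-s))⁻¹)
      (-(1 / (2 * r) * (-1)) / r ^ 2) t := hs.inv (ne_of_gt hr)
  have hp : HasDerivAt (fun s : ℝ => (myP a k).eval ((Real.sqrt (-s))⁻¹))
      ((myP a k).derivative.eval r⁻¹ * (-(1 / (2 * r) * (-1)) / r ^ 2)) t :=
    HasDerivAt.comp (h₂ := fun x => (myP a k).eval x) t (Polynomial.hasDerivAt (p := myP a k) r⁻¹) hv
  have := hE.mul hp
  refine this.congr_deriv ?_
  symm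
  rw [myG, myP_eval_succ]
  have hrne : r ≠ 0 := ne_of_gt hr
  rw [← hrdef]
  field_simp

lemma myG_le {a ε : ℝ} (ha : 0 ≤ a) (hε : 0 < ε) (k : ℕ) {t : ℝ} (ht : t ≤ -ε) :
    myG a k t ≤ Real.exp (-(a * Real.sqrt ε)) *
      ((a+1)^k * (myP 1 k).eval ((Real.sqrt ε)⁻¹)) := by
  have hrε : 0 < Real.sqrt ε := Real.sqrt_pos.2 hε
  have hr : Real.sqrt ε ≤ Real.sqrt (-t) := Real.sqrt_le_sqrt (by linarith)
  have hr0 : 0 < Real.sqrt (-t) := lt_of_lt_of_le hrε hr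
  have hexp : Real.exp (-(a * Real.sqrt (-t))) ≤ Real.exp (-(a * Real.sqrt ε)) := by
    apply Real.exp_le_exp.2
    have := mul_le_mul_of_nonneg_left hr ha
    linarith
  have hinv : (Real.sqrt (-t))⁻¹ ≤ (Real.sqrt ε)⁻¹ := inv_anti₀ hrε hr
  have heval : (myP a k).eval ((Real.sqrt (-t))⁻¹) ≤
      (a+1)^k * (myP 1 k).eval ((Real.sqrt ε)⁻¹) := by
    have hq : ((Polynomial.C ((a+1)^k)) * myP 1 k).eval ((Real.sqrt ε)⁻¹) =
        (a+1)^k * (myP 1 k).eval ((Real.sqrt ε)⁻¹) := by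
      simp [Polynomial.eval_mul]
    rw [← hq]
    apply eval_le_eval (by positivity) hinv (myP_coeff_nonneg ha k)
    intro i
    rw [Polynomial.coeff_C_mul]
    exact myP_coeff_le ha k i
  have hnn : 0 ≤ (myP a k).eval ((Real.sqrt (-t))⁻¹) :=
    eval_nonneg' (by positivity) (myP_coeff_nonneg ha k)
  calc myG a k t = Real.exp (-(a * Real.sqrt (-t))) * (myP a k).eval ((Real.sqrt (-t))⁻¹) := rfl
    _ ≤ Real.exp (-(a * Real.sqrt ε)) * ((a+1)^k * (myP 1 k).eval ((Real.sqrt ε)⁻¹)) := by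
        apply mul_le_mul hexp heval hnn (Real.exp_nonneg _)

/-- Summable uniform bound for the series of `k`-th derivatives on `(-∞, -ε]`. -/
lemma summable_aux (b : ℝ) (hb : 1 ≤ b) (k : ℕ) {ε : ℝ} (hε : 0 < ε) :
    ∃ u : ℕ → ℝ, Summable u ∧
      ∀ (n : ℕ) (y : ℝ), y ≤ -ε → ‖2 * myG (4*n+b) k y‖ ≤ u n := by
  set r : ℝ := Real.exp (-(4 * Real.sqrt ε)) with hrdef
  have hrε : 0 < Real.sqrt ε := Real.sqrt_pos.2 hε
  have hr0 : 0 < r := Real.exp_pos _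
  have hr1 : r < 1 := by
    apply Real.exp_lt_one_iff.2
    nlinarith
  set D : ℝ := (myP 1 k).eval ((Real.sqrt ε)⁻¹) with hDdef
  have hD : 0 ≤ D := eval_nonneg' (by positivity) (myP_coeff_nonneg one_pos.le k)
  refine ⟨fun n => 2 * Real.exp (-(b * Real.sqrt ε)) * r^n * ((b+5)^k * ((n:ℝ)+1)^k * D),
    ?_, ?_⟩
  · -- summability
    have h0 : Summable (fun n : ℕ => (n:ℝ)^k * r^n) :=
      summable_pow_mul_geometric_of_norm_lt_one k
        (by rw [Real.norm_eq_abs, abs_of_pos hr0]; exact hr1)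
    have h1 : Summable (fun n : ℕ => ((n:ℝ)+1)^k * r^(n+1)) := by
      have := (summable_nat_add_iff (f := fun n : ℕ => (n:ℝ)^k * r^n) 1).2 h0
      refine this.congr fun n => ?_
      push_cast
      ring
    have h2 : Summable (fun n : ℕ => ((n:ℝ)+1)^k * r^n) := by
      have := h1.mul_left r⁻¹
      refine this.congr fun n => ?_
      field_simp
      ring
    have := (h2.mul_left (2 * Real.exp (-(b * Real.sqrt ε)) * ((b+5)^k * D)))
    refine this.congr fun n => ?_
    ring
  · intro n y hy
    have ha : (0:ℝ) ≤ 4*n+b := by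
      have := Nat.cast_nonneg (α := ℝ) n
      linarith
    have hG : 0 ≤ myG (4*n+b) k y := myG_nonneg ha k y
    rw [Real.norm_eq_abs, abs_of_nonneg (by linarith)]
    have hle := myG_le ha hε k hy
    have hsplit : Real.exp (-((4*(n:ℝ)+b) * Real.sqrt ε)) =
        Real.exp (-(b * Real.sqrt ε)) * r^n := by
      rw [hrdef, ← Real.exp_nat_mul, ← Real.exp_add]
      congr 1
      push_cast
      ring
    have hpow : (4*(n:ℝ)+b+1)^k ≤ (b+5)^k * ((n:ℝ)+1)^k := by
      rw [← mul_pow]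
      apply pow_le_pow_left₀ (by positivity)
      nlinarith [Nat.cast_nonneg (α := ℝ) n]
    have hDnn : 0 ≤ Real.exp (-(b * Real.sqrt ε)) * r^n := by positivity
    calc 2 * myG (4*n+b) k y
        ≤ 2 * (Real.exp (-((4*(n:ℝ)+b) * Real.sqrt ε)) * ((4*(n:ℝ)+b+1)^k * D)) := by
          linarith [hle]
      _ = 2 * (Real.exp (-(b * Real.sqrt ε)) * r^n) * ((4*(n:ℝ)+b+1)^k * D) := by
          rw [hsplit]; ring
      _ ≤ 2 * (Real.exp (-(b * Real.sqrt ε)) * r^n) * ((b+5)^k * ((n:ℝ)+1)^k * D) := by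
          gcongr
      _ = 2 * Real.exp (-(b * Real.sqrt ε)) * r^n * ((b+5)^k * ((n:ℝ)+1)^k * D) := by ring

lemma summable_myG (b : ℝ) (hb : 1 ≤ b) (k : ℕ) {t : ℝ} (ht : t < 0) :
    Summable (fun n : ℕ => 2 * myG (4*n+b) k t) := by
  obtain ⟨u, hu, hbd⟩ := summable_aux b hb k (ε := -t) (by linarith)
  refine Summable.of_nonneg_of_le (fun n => ?_) (fun n => ?_) hu
  · have hn := Nat.cast_nonneg (α := ℝ) n
    have := myG_nonneg (a := 4*n+b) (by linarith) k t
    linarith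
  · have := hbd n t (by linarith)
    rw [Real.norm_eq_abs] at this
    exact (le_abs_self _).trans this

lemma hasDerivAt_tsum_myG (b : ℝ) (hb : 1 ≤ b) (k : ℕ) {t : ℝ} (ht : t < 0) :
    HasDerivAt (fun s => ∑' n : ℕ, 2 * myG (4*n+b) k s)
      (∑' n : ℕ, 2 * myG (4*n+b) (k+1) t) t := by
  obtain ⟨u, hu, hbd⟩ := summable_aux b hb (k+1) (ε := -t/2) (by linarith)
  have h2 : t ∈ Set.Iio (t/2) := by simp; linarith
  exact hasDerivAt_tsum_of_isPreconnected hu (isOpen_Iio (a := t/2)) isPreconnected_Iio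
    (g := fun (n : ℕ) (s : ℝ) => 2 * myG (4*n+b) k s)
    (g' := fun (n : ℕ) (s : ℝ) => 2 * myG (4*n+b) (k+1) s)
    (fun n y hy => ((hasDerivAt_myG (4*n+b) k
      (show y < 0 by have : y < t/2 := hy; linarith)).const_mul 2))
    (fun n y hy => hbd n y (by have : y < t/2 := hy; linarith))
    h2 (summable_myG b hb k ht) h2

lemma key (b : ℝ) (hb : 1 ≤ b) (k : ℕ) :
    ∀ t : ℝ, t < 0 → iteratedDeriv k (fun s => ∑' n : ℕ, 2 * myG (4*n+b) 0 s) t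
      = ∑' n : ℕ, 2 * myG (4*n+b) k t := by
  induction k with
  | zero => intro t ht; simp
  | succ k ih =>
    intro t ht
    rw [iteratedDeriv_succ]
    have heq : iteratedDeriv k (fun s => ∑' n : ℕ, 2 * myG (4*n+b) 0 s)
        =ᶠ[nhds t] (fun s => ∑' n : ℕ, 2 * myG (4*n+b) k s) := by
      filter_upwards [isOpen_Iio.mem_nhds (show t ∈ Set.Iio (0:ℝ) from ht)] with s hs
      exact ih s hs
    rw [heq.deriv_eq]
    exact (hasDerivAt_tsum_myG b hb k ht).deriv

lemma geom_core {x : ℝ} (hx : 0 < x) (b : ℝ) :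
    ∑' n : ℕ, 2 * Real.exp (-((4*(n:ℝ)+b) * x))
      = 2 * Real.exp (-(b*x)) * (1 - Real.exp (-(4*x)))⁻¹ := by
  have h1 : ∀ n : ℕ, 2 * Real.exp (-((4*(n:ℝ)+b) * x))
      = 2 * Real.exp (-(b*x)) * Real.exp (-(4*x)) ^ n := by
    intro n
    have harg : -((4*(n:ℝ)+b) * x) = -(b*x) + (n:ℝ) * -(4*x) := by ring
    rw [harg, Real.exp_add, Real.exp_nat_mul]
    ring
  rw [tsum_congr h1, tsum_mul_left, tsum_geometric_of_lt_one (Real.exp_nonneg _)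
    (Real.exp_lt_one_iff.2 (by nlinarith))]

lemma series_eq_one {x : ℝ} (hx : 0 < x) :
    Real.exp x / Real.sinh (2*x) = ∑' n : ℕ, 2 * Real.exp (-((4*(n:ℝ)+1) * x)) := by
  rw [geom_core hx 1, Real.sinh_eq]
  have he : (0:ℝ) < Real.exp x := Real.exp_pos x
  have h2 : Real.exp (2*x) = Real.exp x * Real.exp x := by
    rw [two_mul, Real.exp_add]
  have h2' : Real.exp (-(2*x)) = (Real.exp x * Real.exp x)⁻¹ := by
    rw [Real.exp_neg, h2]
  have h4 : Real.exp (-(4*x)) = (Real.exp x * Real.exp x * Real.exp x * Real.exp x)⁻¹ := by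
    rw [Real.exp_neg]
    congr 1
    rw [show (4:ℝ)*x = x + x + (x + x) by ring, Real.exp_add, Real.exp_add]
    ring
  have h1' : Real.exp (-(1*x)) = (Real.exp x)⁻¹ := by rw [Real.exp_neg, one_mul]
  have he1 : 1 < Real.exp x := by
    have := Real.add_one_lt_exp (ne_of_gt hx)
    linarith
  set e := Real.exp x
  have hnum : e * e - (e*e)⁻¹ ≠ 0 := by
    have hee : (1:ℝ) < e * e := by nlinarith [sq_nonneg (e-1)]
    have hip : 0 < (e*e)⁻¹ := by positivity
    have hic : (e*e)⁻¹ * (e*e) = 1 := inv_mul_cancel₀ (by positivity)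
    have hmul := mul_pos hip (show 0 < e*e - 1 by linarith)
    have hlt : (e*e)⁻¹ < 1 := by nlinarith [hmul, hic]
    exact sub_ne_zero.2 ((hlt.trans hee).ne')
  have hden : 1 - (e*e*e*e)⁻¹ ≠ 0 := by
    have hee2 : (1:ℝ) < e * e := by nlinarith [sq_nonneg (e-1)]
    have hee : (1:ℝ) < e*e*e*e := by nlinarith [hee2, sq_nonneg (e*e-1)]
    have hip : 0 < (e*e*e*e)⁻¹ := by positivity
    have hic : (e*e*e*e)⁻¹ * (e*e*e*e) = 1 := inv_mul_cancel₀ (by positivity)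
    have hmul := mul_pos hip (show 0 < e*e*e*e - 1 by linarith)
    have hlt : (e*e*e*e)⁻¹ < 1 := by nlinarith [hmul, hic]
    exact sub_ne_zero.2 (ne_of_lt hlt).symm
  have hgt : (0:ℝ) < -1 + e^4 := by nlinarith [sq_nonneg (e-1), sq_nonneg (e*e-1)]
  have hd0 : (-1 + e^4) ≠ 0 := hgt.ne'
  rw [h2, h2', h4, h1']
  field_simp

lemma series_eq_three {x : ℝ} (hx : 0 < x) :
    Real.exp (-x) / Real.sinh (2*x) = ∑' n : ℕ, 2 * Real.exp (-((4*(n:ℝ)+3) * x)) := by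
  rw [geom_core hx 3, Real.sinh_eq]
  have he : (0:ℝ) < Real.exp x := Real.exp_pos x
  have h2 : Real.exp (2*x) = Real.exp x * Real.exp x := by
    rw [two_mul, Real.exp_add]
  have h2' : Real.exp (-(2*x)) = (Real.exp x * Real.exp x)⁻¹ := by
    rw [Real.exp_neg, h2]
  have h4 : Real.exp (-(4*x)) = (Real.exp x * Real.exp x * Real.exp x * Real.exp x)⁻¹ := by
    rw [Real.exp_neg]
    congr 1
    rw [show (4:ℝ)*x = x + x + (x + x) by ring, Real.exp_add, Real.exp_add]
    ring
  have h3' : Real.exp (-(3*x)) = (Real.exp x * Real.exp x * Real.exp x)⁻¹ := by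
    rw [Real.exp_neg]
    congr 1
    rw [show (3:ℝ)*x = x + x + x by ring, Real.exp_add, Real.exp_add]
  have hm : Real.exp (-x) = (Real.exp x)⁻¹ := Real.exp_neg x
  have he1 : 1 < Real.exp x := by
    have := Real.add_one_lt_exp (ne_of_gt hx)
    linarith
  set e := Real.exp x
  have hnum : e * e - (e*e)⁻¹ ≠ 0 := by
    have hee : (1:ℝ) < e * e := by nlinarith [sq_nonneg (e-1)]
    have hip : 0 < (e*e)⁻¹ := by positivity
    have hic : (e*e)⁻¹ * (e*e) = 1 := inv_mul_cancel₀ (by positivity)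
    have hmul := mul_pos hip (show 0 < e*e - 1 by linarith)
    have hlt : (e*e)⁻¹ < 1 := by nlinarith [hmul, hic]
    exact sub_ne_zero.2 ((hlt.trans hee).ne')
  have hden : 1 - (e*e*e*e)⁻¹ ≠ 0 := by
    have hee2 : (1:ℝ) < e * e := by nlinarith [sq_nonneg (e-1)]
    have hee : (1:ℝ) < e*e*e*e := by nlinarith [hee2, sq_nonneg (e*e-1)]
    have hip : 0 < (e*e*e*e)⁻¹ := by positivity
    have hic : (e*e*e*e)⁻¹ * (e*e*e*e) = 1 := inv_mul_cancel₀ (by positivity)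
    have hmul := mul_pos hip (show 0 < e*e*e*e - 1 by linarith)
    have hlt : (e*e*e*e)⁻¹ < 1 := by nlinarith [hmul, hic]
    exact sub_ne_zero.2 (ne_of_lt hlt).symm
  have hgt : (0:ℝ) < -1 + e^4 := by nlinarith [sq_nonneg (e-1), sq_nonneg (e*e-1)]
  have hd0 : (-1 + e^4) ≠ 0 := hgt.ne'
  rw [h2, h2', h4, h3', hm]
  field_simp

lemma myG_zero (a : ℝ) (s : ℝ) : myG a 0 s = Real.exp (-(a * Real.sqrt (-s))) := by
  simp [myG, myP]

/-- The functions `t ↦ e^{√(-t)}/sinh(2√(-t))` and `t ↦ e^{-√(-t)}/sinh(2√(-t))`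
are absolutely monotonic on `(-∞,0)`: all their derivatives are nonnegative. -/
theorem stmt_12 :
    (∀ k : ℕ, ∀ t : ℝ, t < 0 →
      0 ≤ iteratedDeriv k
        (fun s : ℝ => Real.exp (Real.sqrt (-s)) / Real.sinh (2 * Real.sqrt (-s))) t) ∧
    (∀ k : ℕ, ∀ t : ℝ, t < 0 →
      0 ≤ iteratedDeriv k
        (fun s : ℝ => Real.exp (-Real.sqrt (-s)) / Real.sinh (2 * Real.sqrt (-s))) t) := by
  constructor
  · intro k t ht
    have hEq : (fun s : ℝ => Real.exp (Real.sqrt (-s)) / Real.sinh (2 * Real.sqrt (-s)))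
        =ᶠ[nhds t] (fun s => ∑' n : ℕ, 2 * myG (4*n+1) 0 s) := by
      filter_upwards [isOpen_Iio.mem_nhds (show t ∈ Set.Iio (0:ℝ) from ht)] with s hs
      have hx : 0 < Real.sqrt (-s) := Real.sqrt_pos.2 (by simpa using hs)
      rw [series_eq_one hx]
      exact tsum_congr fun n => by rw [myG_zero]
    rw [hEq.iteratedDeriv_eq k, key 1 le_rfl k t ht]
    exact tsum_nonneg fun n => by
      have := myG_nonneg (a := 4*n+1) (by positivity) k t
      linarith
  · intro k t ht
    have hEq : (fun s : ℝ => Real.exp (-Real.sqrt (-s)) / Real.sinh (2 * Real.sqrt (-s)))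
        =ᶠ[nhds t] (fun s => ∑' n : ℕ, 2 * myG (4*n+3) 0 s) := by
      filter_upwards [isOpen_Iio.mem_nhds (show t ∈ Set.Iio (0:ℝ) from ht)] with s hs
      have hx : 0 < Real.sqrt (-s) := Real.sqrt_pos.2 (by simpa using hs)
      rw [series_eq_three hx]
      exact tsum_congr fun n => by rw [myG_zero]
    rw [hEq.iteratedDeriv_eq k, key 3 (by norm_num) k t ht]
    exact tsum_nonneg fun n => by
      have := myG_nonneg (a := 4*n+3) (by positivity) k t
      linarith
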